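/- Let G = (X, Y; E) be a connected bipartite graph in which the part X has an even number of vertices. Then the 2-multigraph ²G admits a decomposition into two multigraphs (a red one μ_r and a blue one μ_b with μ_r(e) + μ_b(e) = 2 for every edge e) such that every vertex of X has odd degree in both the red and the blue multigraph, and every vertex of Y has even degree in both the red and the blue multigraph; in particular both multigraphs are locally irregular. -/

import Mathlib

/-- The degree of a vertex `v` in the multigraph given by the symmetric
edge-multiplicity function `μ` : the sum of the multiplicities of the edges at `v`. -/
def mdeg {V : Type*} [Fintype V] (μ : V → V → ℕ) (v : V) : ℕ := ∑ u, μ v u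

/-- A multigraph (given by a symmetric edge-multiplicity function `μ`) is locally
irregular if any two vertices adjacent in it (joined by an edge of positive
multiplicity) have distinct degrees. -/
def MulLocIrreg {V : Type*} [Fintype V] (μ : V → V → ℕ) : Prop :=
  ∀ v w, 0 < μ v w → mdeg μ v ≠ mdeg μ w

/-- `μs` is a decomposition of the 2-multigraph `²G` (obtained from `G` by doubling
every edge) into `k` locally irregular submultigraphs: each `μs i` is a symmetric
multiplicity function supported on the edges of `G`, the multiplicities sum to `2`
on every edge of `G`, and each `μs i` is locally irregular. -/
def IsLirDecomp {V : Type*} [Fintype V] (G : SimpleGraph V) (k : ℕ)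
    (μs : Fin k → V → V → ℕ) : Prop :=
  (∀ i v w, μs i v w = μs i w v) ∧
  (∀ i v w, 0 < μs i v w → G.Adj v w) ∧
  (∀ v w, G.Adj v w → ∑ i, μs i v w = 2) ∧
  (∀ i, MulLocIrreg (μs i))

/-- Let `G = (X, Y; E)` be a connected bipartite graph whose part `X` has an even
number of vertices. Then `²G` decomposes into a red multigraph `μr` and a blue
multigraph `μb` (with `μr e + μb e = 2` on every edge of `G`) such that every vertex
of `X` has odd red and blue degree and every vertex of `Y` has even red and blue
degree; in particular both multigraphs are locally irregular. -/
lemma walk_fun {V : Type*} [Fintype V] [DecidableEq V] {G : SimpleGraph V}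
    {a b : V} (p : G.Walk a b) :
    ∃ f : V → V → ZMod 2, (∀ v w, f v w = f w v) ∧ (∀ v w, f v w ≠ 0 → G.Adj v w) ∧
      ∀ v, ∑ u, f v u = (if v = a then 1 else 0) + (if v = b then 1 else 0) := by
  induction p with
  | nil =>
    refine ⟨0, by simp, by simp, fun v => ?_⟩
    split_ifs <;> simp <;> decide
  | @cons a c b h p ih =>
    obtain ⟨f, hsym, hsupp, hdeg⟩ := ih
    refine ⟨fun v w => f v w + ((if v = a then 1 else 0) * (if w = c then 1 else 0)
        + (if v = c then 1 else 0) * (if w = a then 1 else 0)), ?_, ?_, ?_⟩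
    · intro v w; dsimp only; rw [hsym]; ring
    · intro v w hne
      dsimp only at hne
      by_cases h1 : f v w = 0
      · simp only [h1, zero_add] at hne
        by_cases hva : v = a <;> by_cases hwc : w = c <;> by_cases hvc : v = c <;>
          by_cases hwa : w = a <;> subst_vars <;> simp_all <;>
          first | exact h | exact h.symm
      · exact hsupp v w h1
    · intro v
      dsimp only
      rw [Finset.sum_add_distrib, Finset.sum_add_distrib, hdeg,
        ← Finset.mul_sum, ← Finset.mul_sum]
      simp only [Finset.sum_ite_eq', Finset.mem_univ, if_true, mul_one]
      have hac : a ≠ c := G.ne_of_adj h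
      have h2 : ∀ x : ZMod 2, x + x = 0 := by decide
      by_cases hva : v = a <;> by_cases hvc : v = c <;> by_cases hvb : v = b <;>
        simp_all <;> ring_nf <;> simp [h2]

theorem doubled_bipartite_even_part_decomp {V : Type*} [Fintype V] [DecidableEq V]
    (G : SimpleGraph V) (X Y : Finset V) (hpart : ∀ v, v ∈ X ↔ v ∉ Y)
    (hbip : ∀ u v, G.Adj u v → (u ∈ X ↔ v ∈ Y))
    (hconn : G.Connected) (heven : Even X.card) :
    ∃ μr μb : V → V → ℕ,
      (∀ v w, μr v w = μr w v) ∧ (∀ v w, μb v w = μb w v) ∧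
      (∀ v w, 0 < μr v w → G.Adj v w) ∧ (∀ v w, 0 < μb v w → G.Adj v w) ∧
      (∀ v w, G.Adj v w → μr v w + μb v w = 2) ∧
      (∀ v ∈ X, Odd (mdeg μr v) ∧ Odd (mdeg μb v)) ∧
      (∀ v ∈ Y, Even (mdeg μr v) ∧ Even (mdeg μb v)) ∧
      MulLocIrreg μr ∧ MulLocIrreg μb := by
  classical
  haveI : Nonempty V := hconn.nonempty
  set r : V := Classical.arbitrary V with hr
  -- the "demand" function
  set D : V → ZMod 2 := fun v => ∑ u, (if G.Adj v u then (1 : ZMod 2) else 0) with hD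
  set t : V → ZMod 2 := fun v => D v + (if v ∈ X then 1 else 0) with ht
  set S : Finset V := Finset.univ.filter (fun v => t v = 1) with hS
  have h2 : ∀ x : ZMod 2, x = 0 ∨ x = 1 := by decide
  have hadd : ∀ x : ZMod 2, x + x = 0 := by decide
  -- card S is even (as ZMod 2 element 0)
  have hDsum : ∑ v, D v = 0 := by
    have hsymm : ∀ v u : V, (if G.Adj v u then (1 : ZMod 2) else 0)
        = (if G.Adj u v then (1 : ZMod 2) else 0) := by
      intro v u; simp [G.adj_comm]
    have : ∑ p ∈ (Finset.univ ×ˢ Finset.univ : Finset (V × V)),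
        (if G.Adj p.1 p.2 then (1 : ZMod 2) else 0) = 0 := by
      refine Finset.sum_involution (fun p _ => (p.2, p.1)) ?_ ?_ (fun p hp => Finset.mem_univ _) ?_
      · intro p _
        dsimp only
        rw [hsymm p.2 p.1]
        exact hadd _
      · intro p _ hne heq
        apply hne
        have : p.1 = p.2 := congrArg Prod.fst heq.symm ▸ rfl
        have hpp : p.2 = p.1 := (Prod.ext_iff.1 heq).1
        rw [if_neg]
        rw [← hpp]
        exact G.irrefl
      · intro p _; rfl
    rw [hD]
    dsimp only
    have heq : (∑ v : V, ∑ u : V, if G.Adj v u then (1:ZMod 2) else 0)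
        = ∑ p ∈ (Finset.univ ×ˢ Finset.univ : Finset (V × V)),
          (if G.Adj p.1 p.2 then (1:ZMod 2) else 0) :=
      (Finset.sum_product Finset.univ Finset.univ
        (fun p : V × V => if G.Adj p.1 p.2 then (1:ZMod 2) else 0)).symm
    rw [heq]
    exact this
  have hScard : (S.card : ZMod 2) = 0 := by
    have h1 : (S.card : ZMod 2) = ∑ v ∈ S, t v := by
      rw [Finset.sum_congr rfl (fun v hv => (Finset.mem_filter.1 hv).2),
        Finset.sum_const, nsmul_eq_mul, mul_one]
    have h2' : ∑ v ∈ S, t v = ∑ v, t v := by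
      refine Finset.sum_subset (Finset.subset_univ S) ?_
      intro v _ hv
      rcases h2 (t v) with h | h
      · exact h
      · exact absurd (Finset.mem_filter.2 ⟨Finset.mem_univ v, h⟩) hv
    have h3 : ∑ v, t v = 0 := by
      rw [ht]
      simp only [Finset.sum_add_distrib]
      rw [hDsum]
      have : (∑ v, if v ∈ X then (1 : ZMod 2) else 0) = (X.card : ZMod 2) := by
        simp [Finset.sum_ite_mem, Finset.univ_inter]
      rw [this, zero_add]
      obtain ⟨k, hk⟩ := heven
      rw [hk]
      push_cast
      exact hadd _
    rw [h1, h2', h3]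
  -- choose walk functions to the root
  have hwf : ∀ x : V, ∃ f : V → V → ZMod 2, (∀ v w, f v w = f w v) ∧
      (∀ v w, f v w ≠ 0 → G.Adj v w) ∧
      ∀ v, ∑ u, f v u = (if v = x then 1 else 0) + (if v = r then 1 else 0) :=
    fun x => walk_fun ((hconn.preconnected x r).some)
  choose f hsym hsupp hdeg using hwf
  set F : V → V → ZMod 2 := fun v w => ∑ x ∈ S, f x v w with hF
  have hFsym : ∀ v w, F v w = F w v := fun v w =>
    Finset.sum_congr rfl (fun x _ => hsym x v w)
  have hFsupp : ∀ v w, F v w ≠ 0 → G.Adj v w := by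
    intro v w hne
    by_contra hadj
    apply hne
    refine Finset.sum_eq_zero fun x _ => ?_
    by_contra h0
    exact hadj (hsupp x v w h0)
  have hFdeg : ∀ v, ∑ u, F v u = (if v ∈ S then 1 else 0) := by
    intro v
    rw [Finset.sum_comm]
    calc ∑ x ∈ S, ∑ u, f x v u
        = ∑ x ∈ S, ((if v = x then 1 else 0) + (if v = r then 1 else 0)) :=
          Finset.sum_congr rfl (fun x _ => hdeg x v)
      _ = (if v ∈ S then 1 else 0) := by
          rw [Finset.sum_add_distrib, Finset.sum_ite_eq, Finset.sum_const,
            nsmul_eq_mul, hScard, zero_mul, add_zero]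
  -- key parity fact: (∑ u, if Adj v u then 1 + F v u else 0) = [v ∈ X]
  have hkey : ∀ v, (∑ u, if G.Adj v u then 1 + F v u else 0)
      = (if v ∈ X then (1 : ZMod 2) else 0) := by
    intro v
    have e1 : (∑ u, if G.Adj v u then 1 + F v u else 0)
        = D v + ∑ u, (if G.Adj v u then F v u else 0) := by
      rw [hD]
      dsimp only
      rw [← Finset.sum_add_distrib]
      refine Finset.sum_congr rfl fun u _ => ?_
      split_ifs <;> simp
    have e2 : (∑ u, if G.Adj v u then F v u else 0) = ∑ u, F v u := by
      refine Finset.sum_congr rfl fun u _ => ?_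
      split_ifs with h
      · rfl
      · by_contra hne
        exact h (hFsupp v u fun h0 => hne h0.symm)
    have e3 : (if v ∈ S then (1 : ZMod 2) else 0) = t v := by
      rcases h2 (t v) with h | h
      · rw [h]; rw [if_neg]; intro hv; rw [(Finset.mem_filter.1 hv).2] at h; simp at h
      · rw [h]; rw [if_pos (Finset.mem_filter.2 ⟨Finset.mem_univ v, h⟩)]
    rw [e1, e2, hFdeg, e3, ht]
    dsimp only
    rw [← add_assoc, hadd, zero_add]
  -- the two multiplicity functions
  set μr : V → V → ℕ := fun v w => if G.Adj v w then 1 + (F v w).val else 0 with hμr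
  set μb : V → V → ℕ := fun v w => if G.Adj v w then ((1 : ZMod 2) + F v w).val else 0 with hμb
  have hrsym : ∀ v w, μr v w = μr w v := by
    intro v w
    rw [hμr]
    dsimp only
    by_cases h : G.Adj v w
    · rw [if_pos h, if_pos h.symm, hFsym]
    · rw [if_neg h, if_neg (fun h' => h h'.symm)]
  have hbsym : ∀ v w, μb v w = μb w v := by
    intro v w
    rw [hμb]
    dsimp only
    by_cases h : G.Adj v w
    · rw [if_pos h, if_pos h.symm, hFsym]
    · rw [if_neg h, if_neg (fun h' => h h'.symm)]
  have hrsupp : ∀ v w, 0 < μr v w → G.Adj v w := by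
    intro v w h
    by_contra hadj
    rw [hμr] at h; simp only [if_neg hadj] at h; exact absurd h (lt_irrefl 0)
  have hbsupp : ∀ v w, 0 < μb v w → G.Adj v w := by
    intro v w h
    by_contra hadj
    rw [hμb] at h; simp only [if_neg hadj] at h; exact absurd h (lt_irrefl 0)
  have hsum2 : ∀ v w, G.Adj v w → μr v w + μb v w = 2 := by
    intro v w h
    rw [hμr, hμb]
    dsimp only
    rw [if_pos h, if_pos h]
    have : ∀ x : ZMod 2, 1 + x.val + ((1 : ZMod 2) + x).val = 2 := by decide
    exact this _
  -- parity computations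
  have hodd : ∀ n : ℕ, ((n : ZMod 2) = 1) → Odd n := by
    intro n h
    refine Nat.odd_iff.2 ?_
    have := congrArg ZMod.val h
    rwa [ZMod.val_natCast] at this
  have heven' : ∀ n : ℕ, ((n : ZMod 2) = 0) → Even n := by
    intro n h
    refine Nat.even_iff.2 ?_
    have := congrArg ZMod.val h
    rwa [ZMod.val_natCast] at this
  have hcastR : ∀ v, ((mdeg μr v : ℕ) : ZMod 2) = (if v ∈ X then 1 else 0) := by
    intro v
    rw [mdeg, Nat.cast_sum, ← hkey v]
    refine Finset.sum_congr rfl fun u _ => ?_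
    rw [hμr]
    dsimp only
    split_ifs with h
    · push_cast
      rw [ZMod.natCast_val, ZMod.cast_id]
    · simp
  have hcastB : ∀ v, ((mdeg μb v : ℕ) : ZMod 2) = (if v ∈ X then 1 else 0) := by
    intro v
    rw [mdeg, Nat.cast_sum, ← hkey v]
    refine Finset.sum_congr rfl fun u _ => ?_
    rw [hμb]
    dsimp only
    split_ifs with h
    · rw [ZMod.natCast_val, ZMod.cast_id]
    · simp
  have hXodd : ∀ v ∈ X, Odd (mdeg μr v) ∧ Odd (mdeg μb v) := by
    intro v hv
    exact ⟨hodd _ (by rw [hcastR v, if_pos hv]), hodd _ (by rw [hcastB v, if_pos hv])⟩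
  have hYeven : ∀ v ∈ Y, Even (mdeg μr v) ∧ Even (mdeg μb v) := by
    intro v hv
    have hvX : v ∉ X := fun h => (hpart v).1 h hv
    exact ⟨heven' _ (by rw [hcastR v, if_neg hvX]), heven' _ (by rw [hcastB v, if_neg hvX])⟩
  have hone : ∀ v w, G.Adj v w → (v ∈ X ∧ w ∈ Y) ∨ (v ∈ Y ∧ w ∈ X) := by
    intro v w h
    by_cases hv : v ∈ X
    · exact Or.inl ⟨hv, (hbip v w h).1 hv⟩
    · have hvY : v ∈ Y := by
        by_contra hy; exact hv ((hpart v).2 hy)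
      have hwY : w ∉ Y := fun hw => hv ((hbip v w h).2 hw)
      exact Or.inr ⟨hvY, (hpart w).2 hwY⟩
  have hirr : ∀ μ : V → V → ℕ, (∀ v w, 0 < μ v w → G.Adj v w) →
      (∀ v ∈ X, Odd (mdeg μ v)) → (∀ v ∈ Y, Even (mdeg μ v)) → MulLocIrreg μ := by
    intro μ hs hX hY v w hpos heq
    rcases hone v w (hs v w hpos) with ⟨hv, hw⟩ | ⟨hv, hw⟩
    · exact (Nat.not_odd_iff_even.2 (hY w hw)) (heq ▸ hX v hv)
    · exact (Nat.not_odd_iff_even.2 (hY v hv)) (heq ▸ hX w hw)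
  exact ⟨μr, μb, hrsym, hbsym, hrsupp, hbsupp, hsum2, hXodd, hYeven,
    hirr μr hrsupp (fun v hv => (hXodd v hv).1) (fun v hv => (hYeven v hv).1),
    hirr μb hbsupp (fun v hv => (hXodd v hv).2) (fun v hv => (hYeven v hv).2)⟩
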